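/- Let n ≥ 3, α ≥ 0, and let μ be a finite signed zonal Borel measure on S^{n-1} supported in the closed upper hemisphere {u : ⟨ē,u⟩ ≥ 0}, such that |μ|({u : ⟨ē,u⟩ > cos r}) ≤ C·r^α for all r ≥ 0 and some C > 0. If α < (n-2)/2 then the Fourier–Legendre coefficients aⁿₖ[μ] = ∫_{S^{n-1}} Pⁿₖ(⟨ē,u⟩) μ(du) satisfy aⁿₖ[μ] = O(k^{-α}) as k → ∞. -/

import Mathlib

set_option maxHeartbeats 8000000


open MeasureTheory

/-- `p` is the Legendre polynomial of dimension `n` and degree `k`: it is a polynomial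
function, normalized by `p 1 = 1`, satisfying the Legendre ODE
`(1-t²)y'' - (n-1)t·y' + k(k+n-2)y = 0`. -/
def IsLegendre (n k : ℕ) (p : ℝ → ℝ) : Prop :=
  (∃ q : Polynomial ℝ, ∀ t, p t = q.eval t) ∧ p 1 = 1 ∧
    ∀ t : ℝ, (1 - t ^ 2) * iteratedDeriv 2 p t - ((n : ℝ) - 1) * t * deriv p t +
      (k : ℝ) * ((k : ℝ) + (n : ℝ) - 2) * p t = 0

lemma hasDerivAt_one_sub_sq (t : ℝ) : HasDerivAt (fun t : ℝ => 1 - t^2) (-(2*t)) t := by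
  simpa using ((hasDerivAt_pow 2 t).const_sub 1)

lemma hasDerivAt_E (m K : ℝ) (p p1 p2 : ℝ → ℝ) (t : ℝ)
    (hp : HasDerivAt p (p1 t) t) (hp1 : HasDerivAt p1 (p2 t) t)
    (hode : (1-t^2)*p2 t = (2*m+1)*t*p1 t - (K^2-m^2)*p t)
    (hS : 0 < 1 - t^2) (hD : 0 < K^2*(1-t^2) - m*(m-1)) :
    HasDerivAt (fun t => (1-t^2)^m *
        ((p t)^2 + (m*t*p t - (1-t^2)*p1 t)^2 / (K^2*(1-t^2) - m*(m-1))))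
      (2*t*m*(m-1)*(1-t^2)^(m-1)*(m*t*p t - (1-t^2)*p1 t)^2
        / (K^2*(1-t^2) - m*(m-1))^2) t := by
  have hs := hasDerivAt_one_sub_sq t
  have hSm : HasDerivAt (fun t : ℝ => (1-t^2)^m) (m*(1-t^2)^(m-1) * -(2*t)) t := by
    have h := (Real.hasDerivAt_rpow_const (x := 1-t^2) (p := m) (Or.inl hS.ne')).comp t hs
    simpa [mul_comm, mul_assoc, Function.comp_def] using h
  have hw : HasDerivAt (fun t => m*t*p t - (1-t^2)*p1 t)
      ((m*p t + m*t*p1 t) - (-(2*t)*p1 t + (1-t^2)*p2 t)) t := by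
    have h1 : HasDerivAt (fun t => m*t*p t) (m*p t + m*t*p1 t) t := by
      have := ((hasDerivAt_id t).const_mul m).mul hp
      exact this.congr_deriv (by simp only [id_eq]; ring)
    exact h1.sub (hs.mul hp1)
  have hD' : HasDerivAt (fun t => K^2*(1-t^2) - m*(m-1)) (K^2 * -(2*t)) t :=
    (hs.const_mul (K^2)).sub_const _
  have hG : HasDerivAt (fun t => (p t)^2 + (m*t*p t - (1-t^2)*p1 t)^2 / (K^2*(1-t^2) - m*(m-1)))
      (2*p t*p1 t +
        ((2*(m*t*p t - (1-t^2)*p1 t)*((m*p t + m*t*p1 t) - (-(2*t)*p1 t + (1-t^2)*p2 t)))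
            * (K^2*(1-t^2) - m*(m-1))
          - (m*t*p t - (1-t^2)*p1 t)^2 * (K^2 * -(2*t))) / (K^2*(1-t^2) - m*(m-1))^2) t := by
    have hsq : HasDerivAt (fun t => (p t)^2) (2*p t*p1 t) t := by
      have := hp.pow 2; exact this.congr_deriv (by simp)
    have hwsq : HasDerivAt (fun t => (m*t*p t - (1-t^2)*p1 t)^2)
        (2*(m*t*p t - (1-t^2)*p1 t)*((m*p t + m*t*p1 t) - (-(2*t)*p1 t + (1-t^2)*p2 t))) t := by
      have := hw.pow 2; exact this.congr_deriv (by simp)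
    exact hsq.add (hwsq.div hD' hD.ne')
  have hraw := hSm.mul hG
  refine hraw.congr_deriv ?_
  have hy2 : p2 t = ((2*m+1)*t*p1 t - (K^2-m^2)*p t)/(1-t^2) := by
    field_simp
    linarith [hode]
  have hsplit : (1-t^2)^m = (1-t^2)^(m-1) * (1-t^2) := by
    rw [← Real.rpow_add_one hS.ne' (m-1)]
    ring_nf
  rw [hy2, hsplit]
  field_simp [hD.ne', hS.ne', show (1-t^2)*K^2 - m*(m-1) ≠ 0 by nlinarith]
  ring

lemma hasDerivAt_Etilde (m K : ℝ) (p p1 p2 : ℝ → ℝ) (t : ℝ)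
    (hp : HasDerivAt p (p1 t) t) (hp1 : HasDerivAt p1 (p2 t) t)
    (hode : (1-t^2)*p2 t = (2*m+1)*t*p1 t - (K^2-m^2)*p t)
    (hS : 0 < 1 - t^2) :
    HasDerivAt (fun t => (1-t^2)^(m-1) *
        ((K^2*(1-t^2) - m*(m-1))*(p t)^2 + (m*t*p t - (1-t^2)*p1 t)^2))
      ((1-t^2)^(m-2) * (-2*t*m*(m-1)) * (p t)^2) t := by
  have hs := hasDerivAt_one_sub_sq t
  have hSm : HasDerivAt (fun t : ℝ => (1-t^2)^(m-1)) ((m-1)*(1-t^2)^(m-2) * -(2*t)) t := by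
    have h := (Real.hasDerivAt_rpow_const (x := 1-t^2) (p := m-1) (Or.inl hS.ne')).comp t hs
    have he : m - 1 - 1 = m - 2 := by ring
    simpa [he, mul_comm, mul_assoc, Function.comp_def] using h
  have hw : HasDerivAt (fun t => m*t*p t - (1-t^2)*p1 t)
      ((m*p t + m*t*p1 t) - (-(2*t)*p1 t + (1-t^2)*p2 t)) t := by
    have h1 : HasDerivAt (fun t => m*t*p t) (m*p t + m*t*p1 t) t := by
      have := ((hasDerivAt_id t).const_mul m).mul hp
      exact this.congr_deriv (by simp only [id_eq]; ring)
    exact h1.sub (hs.mul hp1)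
  have hD' : HasDerivAt (fun t => K^2*(1-t^2) - m*(m-1)) (K^2 * -(2*t)) t :=
    (hs.const_mul (K^2)).sub_const _
  have hG : HasDerivAt
      (fun t => (K^2*(1-t^2) - m*(m-1))*(p t)^2 + (m*t*p t - (1-t^2)*p1 t)^2)
      ((K^2 * -(2*t))*(p t)^2 + (K^2*(1-t^2) - m*(m-1))*(2*p t*p1 t) +
        2*(m*t*p t - (1-t^2)*p1 t)*((m*p t + m*t*p1 t) - (-(2*t)*p1 t + (1-t^2)*p2 t))) t := by
    have hsq : HasDerivAt (fun t => (p t)^2) (2*p t*p1 t) t := by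
      have := hp.pow 2; exact this.congr_deriv (by simp)
    have hwsq : HasDerivAt (fun t => (m*t*p t - (1-t^2)*p1 t)^2)
        (2*(m*t*p t - (1-t^2)*p1 t)*((m*p t + m*t*p1 t) - (-(2*t)*p1 t + (1-t^2)*p2 t))) t := by
      have := hw.pow 2; exact this.congr_deriv (by simp)
    exact (hD'.mul hsq).add hwsq
  have hraw := hSm.mul hG
  refine hraw.congr_deriv ?_
  have hy2 : p2 t = ((2*m+1)*t*p1 t - (K^2-m^2)*p t)/(1-t^2) := by
    field_simp
    linarith [hode]
  have hsplit : (1-t^2)^(m-1) = (1-t^2)^(m-2) * (1-t^2) := by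
    rw [← Real.rpow_add_one hS.ne' (m-2)]
    ring_nf
  rw [hy2, hsplit]
  field_simp
  ring

lemma leg_smooth (n k : ℕ) (p : ℝ → ℝ) (hp : IsLegendre n k p) :
    (∀ t, HasDerivAt p (deriv p t) t) ∧ (∀ t, HasDerivAt (deriv p) (deriv (deriv p) t) t) ∧
    (∀ t, (1-t^2) * (deriv (deriv p) t)
      = ((n:ℝ)-1)*t*deriv p t - (k:ℝ)*((k:ℝ)+(n:ℝ)-2)*p t) := by
  obtain ⟨⟨q, hq⟩, hp1, hode⟩ := hp
  have hpq : p = fun t => q.eval t := funext hq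
  have hd1 : deriv p = fun t => q.derivative.eval t := by
    rw [hpq]; funext t; exact Polynomial.deriv q
  have hd2 : deriv (deriv p) = fun t => q.derivative.derivative.eval t := by
    rw [hd1]; funext t; exact Polynomial.deriv _
  have hit : iteratedDeriv 2 p = deriv (deriv p) := by
    rw [iteratedDeriv_succ, iteratedDeriv_one]
  refine ⟨?_, ?_, ?_⟩
  · intro t; rw [hd1]; rw [hpq]; exact Polynomial.hasDerivAt q t
  · intro t; rw [hd2]; rw [hd1]; exact Polynomial.hasDerivAt _ t
  · intro t
    have h := hode t
    rw [hit] at h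
    linarith [h]

lemma leg_energy (n k : ℕ) (hn : 3 ≤ n) (p : ℝ → ℝ) (hp : IsLegendre n k p) :
    ∀ t ∈ Set.Icc (0:ℝ) 1,
      (k:ℝ)*((k:ℝ)+(n:ℝ)-2) * (p t)^2 + (1-t^2)*(deriv p t)^2 ≤ (k:ℝ)*((k:ℝ)+(n:ℝ)-2) := by
  obtain ⟨hdp, hdp2, hode⟩ := leg_smooth n k p hp
  have hp1 : p 1 = 1 := hp.2.1
  set L : ℝ := (k:ℝ)*((k:ℝ)+(n:ℝ)-2) with hL
  set F : ℝ → ℝ := fun t => L * (p t)^2 + (1-t^2)*(deriv p t)^2 with hF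
  have hdF : ∀ t : ℝ, HasDerivAt F
      (L * (2 * p t * deriv p t) + ((-(2*t))*(deriv p t)^2 +
        (1-t^2)*(2 * deriv p t * deriv (deriv p) t))) t := by
    intro t
    have h1 : HasDerivAt (fun t => L * (p t)^2) (L * (2 * p t * deriv p t)) t := by
      have := ((hdp t).pow 2).const_mul L
      simpa [mul_comm, mul_assoc, mul_left_comm] using this
    have h2 : HasDerivAt (fun t : ℝ => (1-t^2)*(deriv p t)^2)
        ((-(2*t))*(deriv p t)^2 + (1-t^2)*(2 * deriv p t * deriv (deriv p) t)) t := by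
      have hq2 : HasDerivAt (fun t => (deriv p t)^2) (2 * deriv p t * deriv (deriv p) t) t := by
        simpa [mul_comm, mul_assoc, Pi.pow_def] using (hdp2 t).pow 2
      simpa [Pi.mul_def] using (hasDerivAt_one_sub_sq t).mul hq2
    simpa [Pi.add_def] using h1.add h2
  have hmono : MonotoneOn F (Set.Icc (0:ℝ) 1) := by
    apply monotoneOn_of_deriv_nonneg (convex_Icc 0 1)
    · exact (fun t _ => ((hdF t).continuousAt.continuousWithinAt))
    · exact fun t _ => ((hdF t).differentiableAt.differentiableWithinAt)
    · intro x hx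
      rw [interior_Icc] at hx
      rw [(hdF x).deriv]
      have : L * (2 * p x * deriv p x) + ((-(2*x))*(deriv p x)^2 +
          (1-x^2)*(2 * deriv p x * deriv (deriv p) x))
          = 2 * x * ((n:ℝ)-2) * (deriv p x)^2 := by
        linear_combination (2 * deriv p x) * hode x
      rw [this]
      have hn2 : (0:ℝ) ≤ (n:ℝ) - 2 := by
        have : (3:ℝ) ≤ (n:ℝ) := by exact_mod_cast hn
        linarith
      exact mul_nonneg (mul_nonneg (mul_nonneg (by norm_num) hx.1.le) hn2) (sq_nonneg _)
  intro t ht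
  have := hmono ht (Set.mem_Icc.mpr ⟨zero_le_one, le_refl 1⟩) ht.2
  have hF1 : F 1 = L := by simp [hF, hp1]
  rw [hF1] at this
  exact this

lemma leg_szego (n k : ℕ) (hn : 3 ≤ n) (hk : 2*(n-2) ≤ k) (p : ℝ → ℝ) (hp : IsLegendre n k p)
    (t : ℝ) (ht0 : 0 ≤ t) (ht1 : t ≤ Real.cos (Real.pi*(((n:ℝ)-2)/2)/k)) :
    (1-t^2)^(((n:ℝ)-2)/2) * (p t)^2 ≤ 5 * (Real.pi*(((n:ℝ)-2)/2)/k)^((n:ℝ)-2) := by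
  have energy := leg_energy n k hn p hp
  obtain ⟨hdp, hdp2, hode0⟩ := leg_smooth n k p hp
  have hn3 : (3:ℝ) ≤ (n:ℝ) := by exact_mod_cast hn
  set m : ℝ := ((n:ℝ)-2)/2 with hm_def
  have h2m : 2*m = (n:ℝ)-2 := by rw [hm_def]; ring
  have hm : (1:ℝ)/2 ≤ m := by rw [hm_def]; linarith
  have hm0 : 0 < m := by linarith
  have hk4 : 4*m ≤ (k:ℝ) := by
    have h2 : 2 ≤ n := by omega
    have : ((2*(n-2) : ℕ) : ℝ) ≤ (k:ℝ) := by exact_mod_cast hk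
    rw [Nat.cast_mul, Nat.cast_sub h2] at this
    push_cast at this
    linarith
  have hkpos : (0:ℝ) < k := by linarith
  set r : ℝ := Real.pi*m/k with hr_def
  have hr0 : 0 < r := by
    have := Real.pi_pos
    rw [hr_def]; positivity
  have hr4 : r ≤ Real.pi/4 := by
    rw [hr_def]
    have h1 : Real.pi*m/(k:ℝ) ≤ Real.pi*m/(4*m) :=
      div_le_div_of_nonneg_left (by positivity) (by positivity) hk4
    have h2 : Real.pi*m/(4*m) = Real.pi/4 := by field_simp
    linarith
  have hrpi2 : r < Real.pi/2 := by
    have := Real.pi_pos; linarith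
  set c : ℝ := Real.cos r with hc_def
  have hc0 : 0 < c := Real.cos_pos_of_mem_Ioo ⟨by linarith [Real.pi_pos], hrpi2⟩
  have hc1 : c ≤ 1 := Real.cos_le_one r
  have hsinpos : 0 < Real.sin r := Real.sin_pos_of_pos_of_lt_pi hr0 (by linarith [Real.pi_pos])
  set s2 : ℝ := 1 - c^2 with hs2_def
  have hsin2 : Real.sin r ^ 2 = s2 := by
    rw [hs2_def, hc_def]
    nlinarith [Real.sin_sq_add_cos_sq r]
  have hs2pos : 0 < s2 := by rw [← hsin2]; positivity
  have hsin_low : 2*m/(k:ℝ) ≤ Real.sin r := by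
    have h := Real.mul_le_sin (x := r) hr0.le (by linarith)
    have : 2/Real.pi * r = 2*m/(k:ℝ) := by
      rw [hr_def]; field_simp
    linarith [this ▸ h]
  have hs2up : s2 ≤ r^2 := by
    have h1 : Real.sin r ≤ r := Real.sin_le hr0.le
    nlinarith [hsinpos]
  set K : ℝ := (k:ℝ) + m with hK_def
  have hKpos : 0 < K := by rw [hK_def]; linarith
  have hkK : (k:ℝ) ≤ K := by rw [hK_def]; linarith
  have hKs2 : 4*m^2 ≤ K^2 * s2 := by
    have h1 : (2*m/(k:ℝ))^2 ≤ s2 := by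
      rw [← hsin2]
      exact pow_le_pow_left₀ (by positivity) hsin_low 2
    have h2 : (2*m/(k:ℝ))^2 = 4*m^2/(k:ℝ)^2 := by ring
    have h3 : 4*m^2 ≤ (k:ℝ)^2 * s2 := by
      rw [h2] at h1
      rw [div_le_iff₀ (by positivity)] at h1
      linarith [h1]
    have h4 : (k:ℝ)^2 ≤ K^2 := by nlinarith
    nlinarith [mul_le_mul_of_nonneg_right h4 hs2pos.le]
  have hLK : (k:ℝ)*((k:ℝ)+(n:ℝ)-2) = K^2 - m^2 := by
    rw [hK_def]; nlinarith [h2m]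
  have hL1 : (1:ℝ) ≤ (k:ℝ)*((k:ℝ)+(n:ℝ)-2) := by
    have hk1 : (1:ℝ) ≤ (k:ℝ) := by
      have : 2*m ≤ k := by linarith
      linarith
    nlinarith
  -- energy corollaries
  have hbp : ∀ x ∈ Set.Icc (0:ℝ) 1, (p x)^2 ≤ 1 := by
    intro x hx
    have h := energy x hx
    have h2 : 0 ≤ (1-x^2)*(deriv p x)^2 := by
      have : x^2 ≤ 1 := by nlinarith [hx.1, hx.2]
      nlinarith [sq_nonneg (deriv p x)]
    nlinarith
  have hbp1 : ∀ x ∈ Set.Icc (0:ℝ) 1, (1-x^2)*(deriv p x)^2 ≤ K^2 := by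
    intro x hx
    have h := energy x hx
    nlinarith [sq_nonneg (p x), hm0]
  -- reduced ODE
  have hode : ∀ x : ℝ, (1-x^2) * (deriv (deriv p) x)
      = (2*m+1)*x*deriv p x - (K^2-m^2)*p x := by
    intro x
    have h := hode0 x
    rw [hLK] at h
    have hn1 : (n:ℝ)-1 = 2*m+1 := by linarith [h2m]
    rw [hn1] at h
    exact h
  -- facts about the region
  have hreg : ∀ x : ℝ, 0 ≤ x → x ≤ c → s2 ≤ 1 - x^2 ∧ 0 < 1 - x^2 := by
    intro x hx0 hxc
    constructor
    · nlinarith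
    · nlinarith [hs2pos]
  have htc : t ≤ c := ht1
  have hSt := hreg t ht0 htc
  clear_value m r c s2 K
  -- case split
  rcases le_or_gt 4 n with hn4 | hn4
  · -- n ≥ 4, m ≥ 1
    have hm1 : (1:ℝ) ≤ m := by
      have h4 : (4:ℝ) ≤ (n:ℝ) := by exact_mod_cast hn4
      rw [hm_def]; linarith
    have hDfacts : ∀ x : ℝ, 0 ≤ x → x ≤ c →
        (3/4)*(K^2*(1-x^2)) ≤ K^2*(1-x^2) - m*(m-1) ∧ 0 < K^2*(1-x^2) - m*(m-1) := by
      intro x hx0 hxc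
      obtain ⟨hS1, hS2⟩ := hreg x hx0 hxc
      clear * - hm1 hS1 hS2 hKs2 hs2pos
      have hK2 : (0:ℝ) ≤ K^2 := sq_nonneg K
      have h2 : 4*m^2 ≤ K^2*(1-x^2) := by nlinarith
      constructor
      · nlinarith
      · nlinarith
    set E : ℝ → ℝ := fun x => (1-x^2)^m *
        ((p x)^2 + (m*x*p x - (1-x^2)*deriv p x)^2 / (K^2*(1-x^2) - m*(m-1))) with hE_def
    have hEd : ∀ x : ℝ, 0 ≤ x → x ≤ c → HasDerivAt E
        (2*x*m*(m-1)*(1-x^2)^(m-1)*(m*x*p x - (1-x^2)*deriv p x)^2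
          / (K^2*(1-x^2) - m*(m-1))^2) x := by
      intro x hx0 hxc
      exact hasDerivAt_E m K p (deriv p) (deriv (deriv p)) x (hdp x) (hdp2 x) (hode x)
        (hreg x hx0 hxc).2 (hDfacts x hx0 hxc).2
    have hmono : MonotoneOn E (Set.Icc 0 c) := by
      apply monotoneOn_of_deriv_nonneg (convex_Icc 0 c)
      · exact fun x hx => ((hEd x hx.1 hx.2).continuousAt.continuousWithinAt)
      · intro x hx
        rw [interior_Icc] at hx
        exact ((hEd x hx.1.le hx.2.le).differentiableAt.differentiableWithinAt)
      · intro x hx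
        rw [interior_Icc] at hx
        rw [(hEd x hx.1.le hx.2.le).deriv]
        have hS := (hreg x hx.1.le hx.2.le).1
        have hA : (0:ℝ) ≤ (1-x^2)^(m-1) := Real.rpow_nonneg (by linarith [hs2pos]) _
        apply div_nonneg _ (sq_nonneg _)
        have h1 : (0:ℝ) ≤ 2*x*m*(m-1) := by
          apply mul_nonneg _ (by linarith)
          apply mul_nonneg _ hm0.le
          linarith [hx.1]
        exact mul_nonneg (mul_nonneg h1 hA) (sq_nonneg _)
    have hEt : E t ≤ E c :=
      hmono (Set.mem_Icc.mpr ⟨ht0, htc⟩) (Set.mem_Icc.mpr ⟨hc0.le, le_refl c⟩) htc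
    have hlow : (1-t^2)^m * (p t)^2 ≤ E t := by
      simp only [hE_def]
      have hA : (0:ℝ) ≤ (1-t^2)^m := Real.rpow_nonneg (by linarith [hSt.2]) _
      have h0 : 0 ≤ (m*t*p t - (1-t^2)*deriv p t)^2 / (K^2*(1-t^2) - m*(m-1)) :=
        div_nonneg (sq_nonneg _) (hDfacts t ht0 htc).2.le
      exact mul_le_mul_of_nonneg_left (le_add_of_nonneg_right h0) hA
    have hupp : E c ≤ 5 * s2^m := by
      simp only [hE_def]
      have hcc : c ∈ Set.Icc (0:ℝ) 1 := ⟨hc0.le, hc1⟩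
      have hpc : (p c)^2 ≤ 1 := hbp c hcc
      have hpc1 : (1-c^2)*(deriv p c)^2 ≤ K^2 := hbp1 c hcc
      obtain ⟨hD1, hD2⟩ := hDfacts c hc0.le (le_refl c)
      have hs2c : (1-c^2) = s2 := by rw [hs2_def]
      have hw2 : (m*c*p c - (1-c^2)*deriv p c)^2 ≤ 2*m^2 + 2*s2*K^2 := by
        have e1 : (m*c*p c)^2 ≤ m^2 := by
          clear * - hpc hc0 hc1
          have hc2 : c^2 ≤ 1 := by nlinarith
          have hcp : c^2*(p c)^2 ≤ 1 := mul_le_one₀ hc2 (sq_nonneg _) hpc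
          calc (m*c*p c)^2 = m^2*(c^2*(p c)^2) := by ring
            _ ≤ m^2*1 := mul_le_mul_of_nonneg_left hcp (sq_nonneg m)
            _ = m^2 := mul_one _
        have e2 : ((1-c^2)*deriv p c)^2 ≤ s2*K^2 := by
          rw [hs2c] at hpc1 ⊢
          clear * - hpc1 hs2pos
          nlinarith [sq_nonneg (deriv p c)]
        clear * - e1 e2
        nlinarith [sq_nonneg (m*c*p c + (1-c^2)*deriv p c)]
      have hdivle : (m*c*p c - (1-c^2)*deriv p c)^2 / (K^2*(1-c^2) - m*(m-1)) ≤ 10/3 := by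
        rw [div_le_iff₀ hD2]
        rw [hs2c] at hD1 hD2 hw2 ⊢
        clear * - hw2 hKs2 hD1 hD2 hm1
        nlinarith
      have hinner : (p c)^2 + (m*c*p c - (1-c^2)*deriv p c)^2 / (K^2*(1-c^2) - m*(m-1)) ≤ 5 := by
        linarith
      have hA : (0:ℝ) ≤ (1-c^2)^m := Real.rpow_nonneg (by rw [hs2c]; exact hs2pos.le) _
      have hSc : (1-c^2)^m = s2^m := by rw [hs2_def]
      calc (1-c^2)^m * ((p c)^2 + (m*c*p c - (1-c^2)*deriv p c)^2 / (K^2*(1-c^2) - m*(m-1)))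
          ≤ (1-c^2)^m * 5 := mul_le_mul_of_nonneg_left hinner hA
        _ = 5 * s2^m := by rw [hSc]; ring
    have hfinal : (1-t^2)^m * (p t)^2 ≤ 5 * s2^m := by linarith
    have hs2m : s2^m ≤ (r^2)^(m:ℝ) := Real.rpow_le_rpow hs2pos.le hs2up hm0.le
    have hr2m : (r^2)^(m:ℝ) = r^((n:ℝ)-2) := by
      rw [← Real.rpow_natCast r 2, ← Real.rpow_mul hr0.le, ← h2m]
      norm_num
    have hfin2 : s2^m ≤ r^((n:ℝ)-2) := by rw [← hr2m]; exact hs2m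
    calc (1-t^2)^m * (p t)^2 ≤ 5 * s2^m := hfinal
      _ ≤ 5 * r^((n:ℝ)-2) := by linarith
  · -- n = 3, m = 1/2
    have hn3' : n = 3 := by omega
    have hm2 : m = 1/2 := by rw [hm_def, hn3']; norm_num
    have hmm : m*(m-1) = -(1/4) := by rw [hm2]; norm_num
    set E : ℝ → ℝ := fun x => (1-x^2)^(m-1) *
        ((K^2*(1-x^2) - m*(m-1))*(p x)^2 + (m*x*p x - (1-x^2)*deriv p x)^2) with hE_def
    have hEd : ∀ x : ℝ, 0 ≤ x → x ≤ c → HasDerivAt E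
        ((1-x^2)^(m-2) * (-2*x*m*(m-1)) * (p x)^2) x := by
      intro x hx0 hxc
      exact hasDerivAt_Etilde m K p (deriv p) (deriv (deriv p)) x (hdp x) (hdp2 x) (hode x)
        (hreg x hx0 hxc).2
    have hmono : MonotoneOn E (Set.Icc 0 c) := by
      apply monotoneOn_of_deriv_nonneg (convex_Icc 0 c)
      · exact fun x hx => ((hEd x hx.1 hx.2).continuousAt.continuousWithinAt)
      · intro x hx
        rw [interior_Icc] at hx
        exact ((hEd x hx.1.le hx.2.le).differentiableAt.differentiableWithinAt)
      · intro x hx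
        rw [interior_Icc] at hx
        rw [(hEd x hx.1.le hx.2.le).deriv]
        have hS := (hreg x hx.1.le hx.2.le).1
        have hA : (0:ℝ) ≤ (1-x^2)^(m-2) := Real.rpow_nonneg (by linarith [hs2pos]) _
        have h1 : -2*x*m*(m-1) = x/2 := by linear_combination (-2*x)*hmm
        rw [h1]
        have h2 : (0:ℝ) ≤ x/2 := by linarith [hx.1]
        exact mul_nonneg (mul_nonneg hA h2) (sq_nonneg _)
    have hEt : E t ≤ E c :=
      hmono (Set.mem_Icc.mpr ⟨ht0, htc⟩) (Set.mem_Icc.mpr ⟨hc0.le, le_refl c⟩) htc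
    have hsplit_t : (1-t^2)^m = (1-t^2)^(m-1) * (1-t^2) := by
      rw [← Real.rpow_add_one (ne_of_gt hSt.2) (m-1)]
      ring_nf
    have hlow : K^2 * ((1-t^2)^m * (p t)^2) ≤ E t := by
      simp only [hE_def]
      rw [hsplit_t]
      have hA : (0:ℝ) ≤ (1-t^2)^(m-1) := Real.rpow_nonneg (by linarith [hSt.2]) _
      have hD : K^2*(1-t^2) - m*(m-1) = K^2*(1-t^2) + 1/4 := by linear_combination -hmm
      rw [hD]
      clear * - hA
      nlinarith [mul_nonneg hA (sq_nonneg (p t)),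
        mul_nonneg hA (sq_nonneg (m*t*p t - (1-t^2)*deriv p t))]
    have hupp : E c ≤ 4 * K^2 * s2^m := by
      simp only [hE_def]
      have hcc : c ∈ Set.Icc (0:ℝ) 1 := ⟨hc0.le, hc1⟩
      have hpc : (p c)^2 ≤ 1 := hbp c hcc
      have hpc1 : (1-c^2)*(deriv p c)^2 ≤ K^2 := hbp1 c hcc
      have hs2c : (1-c^2) = s2 := by rw [hs2_def]
      have hKs2' : (1:ℝ) ≤ K^2*s2 := by
        clear * - hKs2 hm2
        nlinarith
      have hw2 : (m*c*p c - (1-c^2)*deriv p c)^2 ≤ 1/2 + 2*s2*K^2 := by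
        have e1 : (m*c*p c)^2 ≤ 1/4 := by
          rw [hm2]
          clear * - hpc hc0 hc1
          nlinarith [sq_nonneg (p c), sq_nonneg c]
        have e2 : ((1-c^2)*deriv p c)^2 ≤ s2*K^2 := by
          rw [hs2c] at hpc1 ⊢
          clear * - hpc1 hs2pos
          nlinarith [sq_nonneg (deriv p c)]
        clear * - e1 e2
        nlinarith [sq_nonneg (m*c*p c + (1-c^2)*deriv p c)]
      have hinner : (K^2*(1-c^2) - m*(m-1))*(p c)^2 + (m*c*p c - (1-c^2)*deriv p c)^2
          ≤ 3*K^2*s2 + 3/4 := by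
        rw [hmm, hs2c]
        rw [hs2c] at hw2
        clear * - hpc hw2 hKs2' hs2pos
        nlinarith [sq_nonneg (p c)]
      have hA : (0:ℝ) ≤ (1-c^2)^(m-1) := Real.rpow_nonneg (by rw [hs2c]; exact hs2pos.le) _
      have hsplit_c : s2^m = (1-c^2)^(m-1) * s2 := by
        rw [hs2c, ← Real.rpow_add_one (ne_of_gt hs2pos) (m-1)]
        ring_nf
      have hrec : (1-c^2)^(m-1) ≤ K^2 * s2^m := by
        rw [hsplit_c]
        clear * - hKs2' hA hs2pos
        nlinarith
      calc (1-c^2)^(m-1) * ((K^2*(1-c^2) - m*(m-1))*(p c)^2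
              + (m*c*p c - (1-c^2)*deriv p c)^2)
          ≤ (1-c^2)^(m-1) * (3*K^2*s2 + 3/4) := by
            apply mul_le_mul_of_nonneg_left hinner hA
        _ = 3*K^2*((1-c^2)^(m-1)*s2) + (3/4)*(1-c^2)^(m-1) := by ring
        _ ≤ 3*K^2*s2^m + (3/4)*(K^2*s2^m) := by
            rw [← hsplit_c]
            clear * - hrec
            linarith
        _ ≤ 4 * K^2 * s2^m := by
            have := mul_nonneg (sq_nonneg K) (Real.rpow_nonneg hs2pos.le m)
            clear * - this
            nlinarith
    have hfinal : (1-t^2)^m * (p t)^2 ≤ 5 * s2^m := by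
      have hK2 : 0 < K^2 := by positivity
      have h2 : K^2 * ((1-t^2)^m * (p t)^2) ≤ K^2 * (4 * s2^m) := by
        calc K^2 * ((1-t^2)^m * (p t)^2) ≤ E t := hlow
          _ ≤ E c := hEt
          _ ≤ 4 * K^2 * s2^m := hupp
          _ = K^2 * (4 * s2^m) := by ring
      have h3 := le_of_mul_le_mul_left h2 hK2
      have h4 : (0:ℝ) ≤ s2^m := Real.rpow_nonneg hs2pos.le m
      linarith
    have hs2m : s2^m ≤ (r^2)^(m:ℝ) := Real.rpow_le_rpow hs2pos.le hs2up hm0.le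
    have hr2m : (r^2)^(m:ℝ) = r^((n:ℝ)-2) := by
      rw [← Real.rpow_natCast r 2, ← Real.rpow_mul hr0.le, ← h2m]
      norm_num
    have hfin2 : s2^m ≤ r^((n:ℝ)-2) := by rw [← hr2m]; exact hs2m
    calc (1-t^2)^m * (p t)^2 ≤ 5 * s2^m := hfinal
      _ ≤ 5 * r^((n:ℝ)-2) := by linarith

lemma geom_bound (q : ℝ) (h0 : 0 ≤ q) (h1 : q < 1) (N : ℕ) :
    ∑ i ∈ Finset.range N, q^i ≤ 1/(1-q) := by
  have hne : q ≠ 1 := ne_of_lt h1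
  rw [geom_sum_eq hne N]
  have hq : 0 ≤ q^N := pow_nonneg h0 N
  have hqN : q^N ≤ 1 := pow_le_one₀ h0 h1.le
  have heq : (q^N - 1)/(q - 1) = (1 - q^N)/(1 - q) := by
    rw [div_eq_div_iff (by linarith) (by linarith)]
    ring
  rw [heq]
  gcongr
  · linarith

lemma leg_abs_le_one (n k : ℕ) (hn : 3 ≤ n) (hk : 1 ≤ k) (p : ℝ → ℝ) (hp : IsLegendre n k p) :
    ∀ x ∈ Set.Icc (0:ℝ) 1, |p x| ≤ 1 := by
  intro x hx
  have h := leg_energy n k hn p hp x hx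
  have hk1 : (1:ℝ) ≤ (k:ℝ) := by exact_mod_cast hk
  have hn3 : (3:ℝ) ≤ (n:ℝ) := by exact_mod_cast hn
  have hL1 : (1:ℝ) ≤ (k:ℝ)*((k:ℝ)+(n:ℝ)-2) := by nlinarith
  have hnn : 0 ≤ (1-x^2)*(deriv p x)^2 := by
    have : x^2 ≤ 1 := by nlinarith [hx.1, hx.2]
    nlinarith [sq_nonneg (deriv p x)]
  have hsq : (p x)^2 ≤ 1 := by nlinarith [sq_nonneg (p x)]
  exact (sq_le_one_iff_abs_le_one (p x)).mp hsq


/-- Let `μ` be a finite signed zonal Borel measure on `S^{n-1}` supported in the closed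
upper hemisphere, with `|μ|({u : ⟨e,u⟩ > cos r}) ≤ C·r^α` for all `r ≥ 0`, where
`0 ≤ α < (n-2)/2`. Then the Fourier–Legendre coefficients
`aⁿₖ[μ] = ∫ Pⁿₖ(⟨e,u⟩) dμ(u)` satisfy `aⁿₖ[μ] = O(k^{-α})` as `k → ∞`. -/
theorem multiplier_decay (n : ℕ) (hn : 3 ≤ n) (α C : ℝ) (hα0 : 0 ≤ α)
    (hα : α < ((n : ℝ) - 2) / 2) (hC : 0 < C)
    (e : EuclideanSpace ℝ (Fin n)) (he : ‖e‖ = 1)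
    (μ : SignedMeasure (EuclideanSpace ℝ (Fin n)))
    (hsupp : μ.totalVariation
      {u | u ∈ Metric.sphere (0 : EuclideanSpace ℝ (Fin n)) 1 ∧ 0 ≤ (inner ℝ e u : ℝ)}ᶜ = 0)
    (hzonal : ∀ R : EuclideanSpace ℝ (Fin n) ≃ₗᵢ[ℝ] EuclideanSpace ℝ (Fin n),
      R e = e → μ.map R = μ)
    (hcap : ∀ r : ℝ, 0 ≤ r →
      μ.totalVariation
        {u | u ∈ Metric.sphere (0 : EuclideanSpace ℝ (Fin n)) 1 ∧
          Real.cos r < (inner ℝ e u : ℝ)} ≤ ENNReal.ofReal (C * r ^ α))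
    (P : ℕ → ℝ → ℝ) (hP : ∀ k, IsLegendre n k (P k)) :
    ∃ M : ℝ, ∀ k : ℕ, 1 ≤ k →
      |(∫ u, P k ((inner ℝ e u : ℝ)) ∂μ.toJordanDecomposition.posPart) -
          ∫ u, P k ((inner ℝ e u : ℝ)) ∂μ.toJordanDecomposition.negPart| ≤
        M * (k : ℝ) ^ (-α) := by
  classical
  have hn3 : (3:ℝ) ≤ (n:ℝ) := by exact_mod_cast hn
  set m : ℝ := ((n:ℝ)-2)/2 with hm_def
  have hm : 1/2 ≤ m := by rw [hm_def]; linarith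
  have hm0 : 0 < m := by linarith
  have hmα : α < m := hα
  set a : ℝ := Real.pi * m with ha_def
  have ha0 : 0 < a := mul_pos Real.pi_pos hm0
  set k0 : ℕ := 2*(n-2) with hk0_def
  have hk0ge : 2 ≤ k0 := by omega
  -- measures
  set tv : Measure (EuclideanSpace ℝ (Fin n)) := μ.totalVariation with htv_def
  have htv : tv = μ.toJordanDecomposition.posPart + μ.toJordanDecomposition.negPart := rfl
  haveI hfin : IsFiniteMeasure tv := by
    rw [htv]; infer_instance
  set V : ℝ := (tv Set.univ).toReal with hV_def
  have hV0 : 0 ≤ V := ENNReal.toReal_nonneg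
  -- sets
  set Supp : Set (EuclideanSpace ℝ (Fin n)) :=
    {u | u ∈ Metric.sphere (0 : EuclideanSpace ℝ (Fin n)) 1 ∧ 0 ≤ (inner ℝ e u : ℝ)} with hSupp_def
  set Cap : ℝ → Set (EuclideanSpace ℝ (Fin n)) :=
    fun r => {u | u ∈ Metric.sphere (0 : EuclideanSpace ℝ (Fin n)) 1 ∧
      Real.cos r < (inner ℝ e u : ℝ)} with hCap_def
  have hInnerCont : Continuous (fun u : EuclideanSpace ℝ (Fin n) => (inner ℝ e u : ℝ)) :=
    Continuous.inner continuous_const continuous_id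
  have hCapMeas : ∀ r : ℝ, MeasurableSet (Cap r) := by
    intro r
    rw [hCap_def]
    apply MeasurableSet.inter
    · exact (Metric.isClosed_sphere).measurableSet
    · exact measurableSet_lt measurable_const hInnerCont.measurable
  have hcapR : ∀ r : ℝ, 0 ≤ r → (tv (Cap r)).toReal ≤ C * r^α := by
    intro r hr
    apply ENNReal.toReal_le_of_le_ofReal (by positivity)
    exact hcap r hr
  have hInnerIcc : ∀ u ∈ Supp, (inner ℝ e u : ℝ) ∈ Set.Icc (0:ℝ) 1 := by
    intro u hu
    obtain ⟨hu1, hu2⟩ := hu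
    refine ⟨hu2, ?_⟩
    have hnu : ‖u‖ = 1 := mem_sphere_zero_iff_norm.mp hu1
    have := real_inner_le_norm e u
    rw [he, hnu] at this
    linarith
  -- a.e. membership in Supp
  have hae : ∀ᵐ u ∂tv, u ∈ Supp := by
    rw [MeasureTheory.ae_iff]
    have : {u : EuclideanSpace ℝ (Fin n) | ¬ u ∈ Supp} = Suppᶜ := rfl
    rw [this]
    exact hsupp
  -- pointwise boundedness by 1
  have habs1 : ∀ k : ℕ, 1 ≤ k → ∀ u ∈ Supp, |P k ((inner ℝ e u : ℝ))| ≤ 1 := by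
    intro k hk u hu
    exact leg_abs_le_one n k hn hk (P k) (hP k) _ (hInnerIcc u hu)
  -- continuity of integrand
  have hfc : ∀ k : ℕ, Continuous (fun u : EuclideanSpace ℝ (Fin n) => P k ((inner ℝ e u : ℝ))) := by
    intro k
    obtain ⟨q, hq⟩ := (hP k).1
    have : (fun u : EuclideanSpace ℝ (Fin n) => P k ((inner ℝ e u : ℝ)))
        = (fun u => q.eval ((inner ℝ e u : ℝ))) := by
      funext u; rw [hq]
    rw [this]
    exact (Polynomial.continuous q).comp hInnerCont
  -- integrability
  have hposle : μ.toJordanDecomposition.posPart ≤ tv := by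
    rw [htv]; exact Measure.le_add_right (le_refl _)
  have hnegle : μ.toJordanDecomposition.negPart ≤ tv := by
    rw [htv]; exact Measure.le_add_left (le_refl _)
  have haefbound : ∀ k : ℕ, 1 ≤ k → ∀ᵐ u ∂tv, ‖P k ((inner ℝ e u : ℝ))‖ ≤ 1 := by
    intro k hk
    filter_upwards [hae] with u hu
    rw [Real.norm_eq_abs]
    exact habs1 k hk u hu
  have hinttv : ∀ k : ℕ, 1 ≤ k →
      Integrable (fun u => P k ((inner ℝ e u : ℝ))) tv := by
    intro k hk
    exact Integrable.mono' (integrable_const 1) (hfc k).aestronglyMeasurable (haefbound k hk)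
  have hintpos : ∀ k : ℕ, 1 ≤ k →
      Integrable (fun u => P k ((inner ℝ e u : ℝ))) μ.toJordanDecomposition.posPart := by
    intro k hk
    exact (hinttv k hk).mono_measure hposle
  have hintneg : ∀ k : ℕ, 1 ≤ k →
      Integrable (fun u => P k ((inner ℝ e u : ℝ))) μ.toJordanDecomposition.negPart := by
    intro k hk
    exact (hinttv k hk).mono_measure hnegle
  -- main reduction to total variation integral
  have hmain : ∀ k : ℕ, 1 ≤ k →
      |(∫ u, P k ((inner ℝ e u : ℝ)) ∂μ.toJordanDecomposition.posPart) -
          ∫ u, P k ((inner ℝ e u : ℝ)) ∂μ.toJordanDecomposition.negPart|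
        ≤ ∫ u, |P k ((inner ℝ e u : ℝ))| ∂tv := by
    intro k hk
    have h1 : |∫ u, P k ((inner ℝ e u : ℝ)) ∂μ.toJordanDecomposition.posPart|
        ≤ ∫ u, |P k ((inner ℝ e u : ℝ))| ∂μ.toJordanDecomposition.posPart := by
      simpa [Real.norm_eq_abs] using
        norm_integral_le_integral_norm (μ := μ.toJordanDecomposition.posPart)
          (fun u => P k ((inner ℝ e u : ℝ)))
    have h2 : |∫ u, P k ((inner ℝ e u : ℝ)) ∂μ.toJordanDecomposition.negPart|
        ≤ ∫ u, |P k ((inner ℝ e u : ℝ))| ∂μ.toJordanDecomposition.negPart := by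
      simpa [Real.norm_eq_abs] using
        norm_integral_le_integral_norm (μ := μ.toJordanDecomposition.negPart)
          (fun u => P k ((inner ℝ e u : ℝ)))
    have h3 : ∫ u, |P k ((inner ℝ e u : ℝ))| ∂tv
        = (∫ u, |P k ((inner ℝ e u : ℝ))| ∂μ.toJordanDecomposition.posPart)
          + ∫ u, |P k ((inner ℝ e u : ℝ))| ∂μ.toJordanDecomposition.negPart := by
      rw [htv]
      exact integral_add_measure ((hintpos k hk).abs) ((hintneg k hk).abs)
    rw [h3]
    calc |(∫ u, P k ((inner ℝ e u : ℝ)) ∂μ.toJordanDecomposition.posPart) -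
          ∫ u, P k ((inner ℝ e u : ℝ)) ∂μ.toJordanDecomposition.negPart|
        ≤ |∫ u, P k ((inner ℝ e u : ℝ)) ∂μ.toJordanDecomposition.posPart| +
          |∫ u, P k ((inner ℝ e u : ℝ)) ∂μ.toJordanDecomposition.negPart| := abs_sub _ _
      _ ≤ _ := by linarith
  -- small k bound
  have hsmall : ∀ k : ℕ, 1 ≤ k → ∫ u, |P k ((inner ℝ e u : ℝ))| ∂tv ≤ V := by
    intro k hk
    have h1 : ∫ u, |P k ((inner ℝ e u : ℝ))| ∂tv ≤ ∫ _, (1:ℝ) ∂tv := by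
      apply integral_mono_ae ((hinttv k hk).abs) (integrable_const 1)
      filter_upwards [hae] with u hu
      exact habs1 k hk u hu
    have h2 : ∫ _, (1:ℝ) ∂tv = V := by
      rw [integral_const, smul_eq_mul, mul_one, hV_def, measureReal_def]
    linarith
  -- large k bound
  set q : ℝ := (2:ℝ)^(α-m) with hq_def
  have hq0 : 0 < q := Real.rpow_pos_of_pos two_pos _
  have hq1 : q < 1 := Real.rpow_lt_one_of_one_lt_of_neg one_lt_two (by linarith)
  set M1 : ℝ := C * a^α * (1 + Real.sqrt 5 * Real.pi^m * (1/(1-q))) with hM1_def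
  have hM1nn : 0 ≤ M1 := by
    rw [hM1_def]
    have h5 : (0:ℝ) ≤ Real.sqrt 5 := Real.sqrt_nonneg 5
    have hπ : (0:ℝ) ≤ Real.pi^m := Real.rpow_nonneg Real.pi_pos.le m
    have haα : (0:ℝ) ≤ a^α := Real.rpow_nonneg ha0.le α
    have hq2 : (0:ℝ) ≤ 1/(1-q) := by
      have h : (0:ℝ) < 1 - q := by linarith
      positivity
    have h6 : (0:ℝ) ≤ Real.sqrt 5 * Real.pi^m * (1/(1-q)) :=
      mul_nonneg (mul_nonneg h5 hπ) hq2
    apply mul_nonneg (mul_nonneg hC.le haα)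
    linarith
  have hbig : ∀ k : ℕ, k0 ≤ k → ∫ u, |P k ((inner ℝ e u : ℝ))| ∂tv ≤ M1 * (k:ℝ)^(-α) := by
    intro k hkk0
    have hk1 : 1 ≤ k := by omega
    have hkR : (4:ℝ)*m ≤ (k:ℝ) := by
      have h2 : 2 ≤ n := by omega
      have h3 := hkk0
      rw [hk0_def] at h3
      have h4 : ((2*(n-2) : ℕ) : ℝ) ≤ (k:ℝ) := by exact_mod_cast h3
      rw [Nat.cast_mul, Nat.cast_sub h2] at h4
      push_cast at h4
      rw [hm_def]; linarith
    have hkpos : (0:ℝ) < k := by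
      have h : (1:ℝ) ≤ (k:ℝ) := by exact_mod_cast hk1
      linarith
    set r : ℝ := a/(k:ℝ) with hr_def
    have hr0 : 0 < r := div_pos ha0 hkpos
    have hr4 : r ≤ Real.pi/4 := by
      rw [hr_def, ha_def]
      have h1 : Real.pi*m/(k:ℝ) ≤ Real.pi*m/(4*m) :=
        div_le_div_of_nonneg_left (by positivity) (by positivity) hkR
      have h2 : Real.pi*m/(4*m) = Real.pi/4 := by field_simp
      linarith
    -- find J
    have hex : ∃ J : ℕ, Real.pi/2 < 2^J * r := by
      refine ⟨k+2, ?_⟩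
      have h1 : (k:ℝ) ≤ (2:ℝ)^k := by
        have := Nat.lt_two_pow_self (n := k)
        exact_mod_cast this.le
      have h2 : (2:ℝ)^(k+2)*r = 4*a*((2:ℝ)^k/(k:ℝ)) := by
        rw [hr_def]; field_simp; ring
      have h3 : (1:ℝ) ≤ (2:ℝ)^k/(k:ℝ) := (one_le_div hkpos).mpr h1
      have h4 : 4*a ≤ (2:ℝ)^(k+2)*r := by
        rw [h2]
        nlinarith [ha0]
      have h5 : Real.pi/2 < 4*a := by
        rw [ha_def]
        nlinarith [Real.pi_pos, hm]
      linarith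
    set J : ℕ := Nat.find hex with hJ_def
    have hJspec : Real.pi/2 < 2^J * r := Nat.find_spec hex
    have hJmin : ∀ i, i < J → 2^i * r ≤ Real.pi/2 := fun i hi => le_of_not_gt (Nat.find_min hex hi)
    have hJ1 : 1 ≤ J := by
      by_contra h
      have hJ0 : J = 0 := by omega
      rw [hJ0] at hJspec
      simp at hJspec
      linarith [Real.pi_pos]
    set ρ : ℕ → ℝ := fun j => 2^j * r with hρ_def
    have hρpos : ∀ j, 0 < ρ j := by
      intro j
      simp only [hρ_def]
      positivity
    have hρJ2 : ρ J ≤ Real.pi := by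
      have h1 : ρ (J-1) ≤ Real.pi/2 := hJmin (J-1) (by omega)
      have h2 : ρ J = 2 * ρ (J-1) := by
        simp only [hρ_def]
        have hpow : (2:ℝ)^J = 2*(2:ℝ)^(J-1) := by
          conv_lhs => rw [show J = (J-1)+1 from by omega]
          rw [pow_succ]; ring
        rw [hpow]; ring
      linarith
    have hcosJ : Real.cos (ρ J) < 0 := by
      apply Real.cos_neg_of_pi_div_two_lt_of_lt
      · exact hJspec
      · linarith [Real.pi_pos]
    set B : ℕ → ℝ := fun j => if j = 0 then 1 else Real.sqrt 5 * (Real.pi/2^j)^m with hB_def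
    have hB0 : ∀ j, 0 ≤ B j := by
      intro j
      simp only [hB_def]
      split
      · norm_num
      · exact mul_nonneg (Real.sqrt_nonneg 5) (Real.rpow_nonneg (by positivity) m)
    -- pointwise bound
    have hpt : ∀ u ∈ Supp, |P k ((inner ℝ e u : ℝ))| ≤
        ∑ j ∈ Finset.range (J+1), (Cap (ρ j)).indicator (fun _ => B j) u := by
      intro u hu
      obtain ⟨ht0, ht1le⟩ := hInnerIcc u hu
      have hterm_nonneg : ∀ j ∈ Finset.range (J+1),
          0 ≤ (Cap (ρ j)).indicator (fun _ => B j) u :=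
        fun j _ => Set.indicator_nonneg (fun _ _ => hB0 j) u
      by_cases hc0 : Real.cos (ρ 0) < (inner ℝ e u : ℝ)
      · have hmem : u ∈ Cap (ρ 0) := by
          simp only [hCap_def]
          exact ⟨hu.1, hc0⟩
        have h1 : |P k ((inner ℝ e u : ℝ))| ≤ 1 := habs1 k hk1 u hu
        have h2 : (Cap (ρ 0)).indicator (fun _ => B 0) u = 1 := by
          rw [Set.indicator_of_mem hmem]
          simp [hB_def]
        calc |P k ((inner ℝ e u : ℝ))| ≤ 1 := h1
          _ = (Cap (ρ 0)).indicator (fun _ => B 0) u := h2.symm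
          _ ≤ ∑ j ∈ Finset.range (J+1), (Cap (ρ j)).indicator (fun _ => B j) u :=
            Finset.single_le_sum hterm_nonneg (by simp)
      · push_neg at hc0
        have hexj : ∃ j : ℕ, Real.cos (ρ j) < (inner ℝ e u : ℝ) :=
          ⟨J, lt_of_lt_of_le hcosJ ht0⟩
        set j : ℕ := Nat.find hexj with hj_def
        have hjspec : Real.cos (ρ j) < (inner ℝ e u : ℝ) := Nat.find_spec hexj
        have hjJ : j ≤ J := Nat.find_le (lt_of_lt_of_le hcosJ ht0)
        have hj1 : 1 ≤ j := by
          by_contra h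
          have hj0 : j = 0 := by omega
          rw [hj0] at hjspec
          linarith
        have hjm : (inner ℝ e u : ℝ) ≤ Real.cos (ρ (j-1)) :=
          le_of_not_gt (Nat.find_min hexj (by omega))
        have hkk : 2*(n-2) ≤ k := by rw [hk0_def] at hkk0; exact hkk0
        have hρ0r : ρ 0 = r := by simp [hρ_def]
        have heq2 : Real.pi*(((n:ℝ)-2)/2)/(k:ℝ) = r := by
          rw [hr_def, ha_def, hm_def]
        have hsz : (1-(inner ℝ e u : ℝ)^2)^m * (P k ((inner ℝ e u : ℝ)))^2 ≤ 5 * r^((n:ℝ)-2) := by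
          have harg : (inner ℝ e u : ℝ) ≤ Real.cos (Real.pi*(((n:ℝ)-2)/2)/(k:ℝ)) := by
            rw [heq2]
            rw [hρ0r] at hc0
            exact hc0
          have h := leg_szego n k hn hkk (P k) (hP k) (inner ℝ e u : ℝ) ht0 harg
          rw [hm_def.symm, heq2] at h
          exact h
        -- lower bound on 1 - t²
        have hρj1pos : 0 < ρ (j-1) := hρpos _
        have hρj1le : ρ (j-1) ≤ Real.pi/2 := hJmin (j-1) (by omega)
        have hsin : 2/Real.pi * ρ (j-1) ≤ Real.sin (ρ (j-1)) :=
          Real.mul_le_sin hρj1pos.le hρj1le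
        have hSlow : (2/Real.pi * ρ (j-1))^2 ≤ 1 - (inner ℝ e u : ℝ)^2 := by
          have h1 : (inner ℝ e u : ℝ)^2 ≤ Real.cos (ρ (j-1))^2 := by
            clear * - ht0 hjm
            nlinarith
          have h2 : (2/Real.pi * ρ (j-1))^2 ≤ Real.sin (ρ (j-1))^2 := by
            have := Real.pi_pos
            exact pow_le_pow_left₀ (by positivity) hsin 2
          have h3 := Real.sin_sq_add_cos_sq (ρ (j-1))
          clear * - h1 h2 h3
          nlinarith
        have hSpos : 0 < 1 - (inner ℝ e u : ℝ)^2 := by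
          have := Real.pi_pos
          have h0 : (0:ℝ) < (2/Real.pi * ρ (j-1))^2 := by positivity
          linarith
        set x : ℝ := 2/Real.pi * ρ (j-1) with hx_def
        have hx0 : 0 < x := by
          have := Real.pi_pos
          rw [hx_def]; positivity
        have h2m' : (n:ℝ)-2 = 2*m := by rw [hm_def]; ring
        have hxm : (x^2)^(m:ℝ) = x^(2*m) := by
          rw [← Real.rpow_natCast x 2, ← Real.rpow_mul hx0.le]
          norm_num
        have h2j : (2:ℝ)^j = 2*(2:ℝ)^(j-1) := by
          conv_lhs => rw [show j = (j-1)+1 from by omega]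
          rw [pow_succ]
          ring
        have hrx : r / x = Real.pi/2^j := by
          rw [hx_def]
          simp only [hρ_def]
          rw [h2j]
          have h2jpos : (0:ℝ) < (2:ℝ)^(j-1) := by positivity
          have := Real.pi_pos
          field_simp
        have hple : (P k ((inner ℝ e u : ℝ)))^2 ≤ 5*(Real.pi/2^j)^(2*m) := by
          have h1 : (x^2)^(m:ℝ) ≤ (1-(inner ℝ e u : ℝ)^2)^(m:ℝ) :=
            Real.rpow_le_rpow (by positivity) hSlow hm0.le
          have h2 : (P k ((inner ℝ e u : ℝ)))^2 * (x^2)^(m:ℝ) ≤ 5 * r^(2*m) := by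
            calc (P k ((inner ℝ e u : ℝ)))^2 * (x^2)^(m:ℝ)
                ≤ (P k ((inner ℝ e u : ℝ)))^2 * (1-(inner ℝ e u : ℝ)^2)^(m:ℝ) :=
                  mul_le_mul_of_nonneg_left h1 (sq_nonneg _)
              _ = (1-(inner ℝ e u : ℝ)^2)^m * (P k ((inner ℝ e u : ℝ)))^2 := by ring
              _ ≤ 5 * r^((n:ℝ)-2) := hsz
              _ = 5 * r^(2*m) := by rw [h2m']
          rw [← hrx, Real.div_rpow hr0.le hx0.le]
          have hxpow : 0 < x^(2*m) := Real.rpow_pos_of_pos hx0 _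
          rw [← mul_div_assoc, le_div_iff₀ hxpow]
          rw [hxm] at h2
          linarith
        have hBj : |P k ((inner ℝ e u : ℝ))| ≤ B j := by
          have hbase : (0:ℝ) < Real.pi/2^j := by
            have := Real.pi_pos
            positivity
          have he1 : (Real.pi/2^j)^(2*m) = ((Real.pi/2^j)^m)^2 := by
            rw [← Real.rpow_natCast ((Real.pi/2^j)^m) 2, ← Real.rpow_mul hbase.le]
            norm_num
            ring_nf
          have he2 : Real.sqrt (5*(Real.pi/2^j)^(2*m)) = Real.sqrt 5 * (Real.pi/2^j)^m := by
            rw [Real.sqrt_mul (by norm_num), he1, Real.sqrt_sq (Real.rpow_nonneg hbase.le m)]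
          have h3 : B j = Real.sqrt (5*(Real.pi/2^j)^(2*m)) := by
            simp only [hB_def, if_neg (by omega : ¬ j = 0)]
            rw [he2]
          rw [h3]
          exact Real.abs_le_sqrt hple
        have hmem : u ∈ Cap (ρ j) := by
          simp only [hCap_def]
          exact ⟨hu.1, hjspec⟩
        calc |P k ((inner ℝ e u : ℝ))| ≤ B j := hBj
          _ = (Cap (ρ j)).indicator (fun _ => B j) u := (Set.indicator_of_mem hmem (fun _ => B j)).symm
          _ ≤ ∑ i ∈ Finset.range (J+1), (Cap (ρ i)).indicator (fun _ => B i) u :=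
            Finset.single_le_sum hterm_nonneg (Finset.mem_range.mpr (by omega))
    -- integrate the pointwise bound
    have hgint : ∀ j : ℕ, Integrable ((Cap (ρ j)).indicator (fun _ => B j)) tv :=
      fun j => (integrable_const (B j)).indicator (hCapMeas (ρ j))
    have hint1 : ∫ u, |P k ((inner ℝ e u : ℝ))| ∂tv
        ≤ ∑ j ∈ Finset.range (J+1), (B j) * (tv (Cap (ρ j))).toReal := by
      have hle : ∫ u, |P k ((inner ℝ e u : ℝ))| ∂tv
          ≤ ∫ u, (∑ j ∈ Finset.range (J+1), (Cap (ρ j)).indicator (fun _ => B j) u) ∂tv := by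
        apply integral_mono_ae ((hinttv k hk1).abs)
          (integrable_finset_sum _ (fun j _ => hgint j))
        filter_upwards [hae] with u hu
        exact hpt u hu
      rw [integral_finset_sum _ (fun j _ => hgint j)] at hle
      refine le_trans hle (le_of_eq (Finset.sum_congr rfl fun j _ => ?_))
      rw [integral_indicator_const _ (hCapMeas (ρ j)), smul_eq_mul, mul_comm, measureReal_def]
    -- bound each term
    have hterm0 : B 0 * (tv (Cap (ρ 0))).toReal ≤ C * r^α := by
      have h2 : ρ 0 = r := by simp [hρ_def]
      have h3 : B 0 = 1 := by simp [hB_def]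
      rw [h3, one_mul, ← h2]
      exact hcapR _ (hρpos 0).le
    have htermj : ∀ j : ℕ, 1 ≤ j →
        B j * (tv (Cap (ρ j))).toReal ≤ Real.sqrt 5 * Real.pi^m * C * r^α * q^j := by
      intro j hj
      have h1 : (tv (Cap (ρ j))).toReal ≤ C * (ρ j)^α := hcapR _ (hρpos j).le
      have h2 : B j = Real.sqrt 5 * (Real.pi/2^j)^m := by
        simp only [hB_def, if_neg (by omega : ¬ j = 0)]
      have hb : (0:ℝ) < (2:ℝ)^j := by positivity
      have e1 : (Real.pi/(2:ℝ)^j)^m = Real.pi^m / ((2:ℝ)^j)^(m:ℝ) :=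
        Real.div_rpow Real.pi_pos.le hb.le m
      have e2 : ((2:ℝ)^j*r)^α = ((2:ℝ)^j)^(α:ℝ) * r^α := Real.mul_rpow hb.le hr0.le
      have e3 : ((2:ℝ)^j)^(α:ℝ) / ((2:ℝ)^j)^(m:ℝ) = q^j := by
        rw [← Real.rpow_natCast (2:ℝ) j, ← Real.rpow_mul (by norm_num : (0:ℝ) ≤ 2),
          ← Real.rpow_mul (by norm_num : (0:ℝ) ≤ 2),
          ← Real.rpow_sub (by norm_num : (0:ℝ) < 2)]
        rw [hq_def, ← Real.rpow_natCast ((2:ℝ)^(α-m)) j,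
          ← Real.rpow_mul (by norm_num : (0:ℝ) ≤ 2)]
        congr 1
        ring
      have hρj : ρ j = (2:ℝ)^j * r := by simp [hρ_def]
      have hBjnn : 0 ≤ B j := hB0 j
      calc B j * (tv (Cap (ρ j))).toReal
          ≤ B j * (C * (ρ j)^α) := mul_le_mul_of_nonneg_left h1 hBjnn
        _ = Real.sqrt 5 * (Real.pi/2^j)^m * (C * ((2:ℝ)^j * r)^α) := by rw [h2, hρj]
        _ = Real.sqrt 5 * C * r^α * Real.pi^m * (((2:ℝ)^j)^(α:ℝ) / ((2:ℝ)^j)^(m:ℝ)) := by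
            rw [e1, e2]
            ring
        _ = Real.sqrt 5 * Real.pi^m * C * r^α * q^j := by
            rw [e3]
            ring
    -- sum the bounds
    have hgeom : ∑ i ∈ Finset.range J, q^(i+1) ≤ 1/(1-q) := by
      have h1 : ∑ i ∈ Finset.range J, q^(i+1) ≤ ∑ i ∈ Finset.range J, q^i :=
        Finset.sum_le_sum (fun i _ => pow_le_pow_of_le_one hq0.le hq1.le (by omega))
      exact le_trans h1 (geom_bound q hq0.le hq1 J)
    have hsumb : ∑ j ∈ Finset.range (J+1), (B j) * (tv (Cap (ρ j))).toReal
        ≤ C * r^α + Real.sqrt 5 * Real.pi^m * C * r^α * (1/(1-q)) := by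
      rw [Finset.sum_range_succ']
      have hrest : ∑ i ∈ Finset.range J, (B (i+1)) * (tv (Cap (ρ (i+1)))).toReal
          ≤ Real.sqrt 5 * Real.pi^m * C * r^α * (1/(1-q)) := by
        have hnn : (0:ℝ) ≤ Real.sqrt 5 * Real.pi^m * C * r^α := by
          have := Real.sqrt_nonneg (5:ℝ)
          have := Real.rpow_nonneg Real.pi_pos.le m
          have := Real.rpow_nonneg hr0.le α
          positivity
        calc ∑ i ∈ Finset.range J, (B (i+1)) * (tv (Cap (ρ (i+1)))).toReal
            ≤ ∑ i ∈ Finset.range J, Real.sqrt 5 * Real.pi^m * C * r^α * q^(i+1) :=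
              Finset.sum_le_sum (fun i _ => htermj (i+1) (by omega))
          _ = Real.sqrt 5 * Real.pi^m * C * r^α * ∑ i ∈ Finset.range J, q^(i+1) := by
              rw [Finset.mul_sum]
          _ ≤ Real.sqrt 5 * Real.pi^m * C * r^α * (1/(1-q)) :=
              mul_le_mul_of_nonneg_left hgeom hnn
      linarith
    -- final computation
    have hra : r^α = a^α * (k:ℝ)^(-α) := by
      rw [hr_def, Real.div_rpow ha0.le hkpos.le, Real.rpow_neg hkpos.le, div_eq_mul_inv]
    calc ∫ u, |P k ((inner ℝ e u : ℝ))| ∂tv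
        ≤ ∑ j ∈ Finset.range (J+1), (B j) * (tv (Cap (ρ j))).toReal := hint1
      _ ≤ C * r^α + Real.sqrt 5 * Real.pi^m * C * r^α * (1/(1-q)) := hsumb
      _ = M1 * (k:ℝ)^(-α) := by
          rw [hM1_def, hra]
          ring
  -- conclusion
  refine ⟨V * (k0:ℝ)^(α:ℝ) + M1, ?_⟩
  intro k hk
  have hknn : (0:ℝ) < (k:ℝ) := by
    have : (1:ℝ) ≤ (k:ℝ) := by exact_mod_cast hk
    linarith
  have hkα : (0:ℝ) < (k:ℝ)^(-α) := Real.rpow_pos_of_pos hknn _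
  rcases lt_or_ge k k0 with hlt | hge
  · have h1 := le_trans (hmain k hk) (hsmall k hk)
    have h2 : (k:ℝ)^(α:ℝ) ≤ (k0:ℝ)^(α:ℝ) :=
      Real.rpow_le_rpow hknn.le (by exact_mod_cast hlt.le) hα0
    have h3 : (0:ℝ) < (k:ℝ)^(α:ℝ) := Real.rpow_pos_of_pos hknn _
    have h4 : (1:ℝ) ≤ (k0:ℝ)^(α:ℝ) * (k:ℝ)^(-α) := by
      rw [Real.rpow_neg hknn.le, ← div_eq_mul_inv]
      rw [le_div_iff₀ h3, one_mul]
      exact h2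
    have h5 : V ≤ V * ((k0:ℝ)^(α:ℝ) * (k:ℝ)^(-α)) := le_mul_of_one_le_right hV0 h4
    have h6 : (0:ℝ) ≤ M1 * (k:ℝ)^(-α) := mul_nonneg hM1nn hkα.le
    calc |(∫ u, P k ((inner ℝ e u : ℝ)) ∂μ.toJordanDecomposition.posPart) -
          ∫ u, P k ((inner ℝ e u : ℝ)) ∂μ.toJordanDecomposition.negPart| ≤ V := h1
      _ ≤ V * ((k0:ℝ)^(α:ℝ) * (k:ℝ)^(-α)) := h5
      _ ≤ (V * (k0:ℝ)^(α:ℝ) + M1) * (k:ℝ)^(-α) := by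
          have := mul_nonneg hM1nn hkα.le
          nlinarith [hkα]
  · have h1 := le_trans (hmain k hk) (hbig k hge)
    have h2 : (0:ℝ) ≤ V * (k0:ℝ)^(α:ℝ) :=
      mul_nonneg hV0 (Real.rpow_nonneg (by positivity) _)
    calc |(∫ u, P k ((inner ℝ e u : ℝ)) ∂μ.toJordanDecomposition.posPart) -
          ∫ u, P k ((inner ℝ e u : ℝ)) ∂μ.toJordanDecomposition.negPart|
        ≤ M1 * (k:ℝ)^(-α) := h1
      _ ≤ (V * (k0:ℝ)^(α:ℝ) + M1) * (k:ℝ)^(-α) := by nlinarith [hkα]
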